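/- Let X be a Banach space whose every non-trivial weakly Cauchy sequence has a convex block sequence generating the summing basis of c_0 as a spreading model, and let T : X → X be a bounded operator such that for every sequence (y_k) in X generating the unit vector basis of c_0 as a spreading model, (T y_k) is norm null. If (x_k) is a sequence in X such that both (x_k) and (T x_k) are non-trivial weakly Cauchy, derive a contradiction; in particular, such a T is weakly compact whenever X contains no sequence of this kind, i.e., T maps bounded sets to relatively weakly compact sets provided ℓ_1 does not embed in X. -/

import Mathlib

open Filter Topology

variable {X : Type*} [NormedAddCommGroup X] [NormedSpace ℝ X]

/-- A sequence is norm null if `‖x_k‖ → 0`. -/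
def NormNull (x : ℕ → X) : Prop :=
  Tendsto (fun k => ‖x k‖) atTop (nhds 0)

/-- `(x_k)` is non-trivial weakly Cauchy: weakly Cauchy but not weakly
convergent. -/
def NontrivWeaklyCauchy (x : ℕ → X) : Prop :=
  (∀ g : X →L[ℝ] ℝ, ∃ L : ℝ, Tendsto (fun k => g (x k)) atTop (nhds L)) ∧
  ¬ ∃ z : X, ∀ g : X →L[ℝ] ℝ, Tendsto (fun k => g (x k)) atTop (nhds (g z))

/-- `(z_k)` is a convex block sequence of `(x_k)`. -/
def IsConvexBlockSeq (x z : ℕ → X) : Prop :=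
  ∃ (F : ℕ → Finset ℕ) (c : ℕ → ℝ),
    (∀ k, (F k).Nonempty) ∧
    (∀ k l, k < l → ∀ a ∈ F k, ∀ b ∈ F l, a < b) ∧
    (∀ i, 0 ≤ c i) ∧
    (∀ k, ∑ i ∈ F k, c i = 1) ∧
    (∀ k, z k = ∑ i ∈ F k, c i • x i)

/-- `(z_k)` generates the summing basis of `c₀` as a spreading model. -/
def GeneratesSummingSM (z : ℕ → X) : Prop :=
  ∃ C : ℝ, 1 ≤ C ∧ ∀ (n : ℕ) (k : ℕ → ℕ), StrictMono k → n ≤ k 0 →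
    ∀ a : ℕ → ℝ,
      ‖∑ i ∈ Finset.range n, a i • z (k i)‖ ≤
        C * (⨆ m ∈ Finset.range (n + 1), |∑ i ∈ Finset.range m, a i|) ∧
      (⨆ m ∈ Finset.range (n + 1), |∑ i ∈ Finset.range m, a i|) ≤
        C * ‖∑ i ∈ Finset.range n, a i • z (k i)‖

/-- `(y_k)` generates the unit vector basis of `c₀` as a spreading model. -/
def GeneratesC0SM (y : ℕ → X) : Prop :=
  ∃ C : ℝ, 1 ≤ C ∧ ∀ (n : ℕ) (k : ℕ → ℕ), StrictMono k → n ≤ k 0 →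
    ∀ a : ℕ → ℝ,
      ‖∑ i ∈ Finset.range n, a i • y (k i)‖ ≤
          C * (⨆ i ∈ Finset.range n, |a i|) ∧
      (⨆ i ∈ Finset.range n, |a i|) ≤
          C * ‖∑ i ∈ Finset.range n, a i • y (k i)‖

lemma block_ge {F : ℕ → Finset ℕ}
    (hne : ∀ k, (F k).Nonempty)
    (hord : ∀ k l, k < l → ∀ a ∈ F k, ∀ b ∈ F l, a < b) :
    ∀ k, ∀ a ∈ F k, k ≤ a := by
  intro k
  induction k with
  | zero => intro a _; exact Nat.zero_le a
  | succ n ih =>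
    intro a ha
    obtain ⟨b, hb⟩ := hne n
    have hba : b < a := hord n (n + 1) (Nat.lt_succ_self n) b hb a ha
    have := ih b hb
    omega

lemma convexBlock_tendsto {x z : ℕ → X} (h : IsConvexBlockSeq x z)
    {g : X →L[ℝ] ℝ} {L : ℝ} (hg : Tendsto (fun k => g (x k)) atTop (nhds L)) :
    Tendsto (fun k => g (z k)) atTop (nhds L) := by
  obtain ⟨F, c, hne, hord, hc0, hc1, hzdef⟩ := h
  have hblock := block_ge hne hord
  rw [Metric.tendsto_atTop] at hg ⊢
  intro ε hε
  obtain ⟨N, hN⟩ := hg (ε / 2) (by linarith)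
  refine ⟨N, fun k hk => ?_⟩
  have hgz : g (z k) = ∑ i ∈ F k, c i * g (x i) := by
    rw [hzdef k, map_sum]; simp [smul_eq_mul]
  have hrw : g (z k) - L = ∑ i ∈ F k, c i * (g (x i) - L) := by
    rw [hgz]
    rw [show (∑ i ∈ F k, c i * (g (x i) - L))
        = (∑ i ∈ F k, c i * g (x i)) - (∑ i ∈ F k, c i) * L by
      rw [Finset.sum_mul, ← Finset.sum_sub_distrib]; congr 1; ext i; ring]
    rw [hc1 k, one_mul]
  rw [Real.dist_eq, hrw]
  calc |∑ i ∈ F k, c i * (g (x i) - L)|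
      ≤ ∑ i ∈ F k, |c i * (g (x i) - L)| := Finset.abs_sum_le_sum_abs _ _
    _ ≤ ∑ i ∈ F k, c i * (ε / 2) := by
        refine Finset.sum_le_sum (fun i hi => ?_)
        rw [abs_mul, abs_of_nonneg (hc0 i)]
        refine mul_le_mul_of_nonneg_left ?_ (hc0 i)
        have hiN : N ≤ i := le_trans hk (hblock k i hi)
        have := hN i hiN
        rw [Real.dist_eq] at this
        exact le_of_lt this
    _ = ε / 2 := by rw [← Finset.sum_mul, hc1 k, one_mul]
    _ < ε := by linarith

lemma convexBlock_ntwc {x z : ℕ → X} (h : IsConvexBlockSeq x z)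
    (hx : NontrivWeaklyCauchy x) : NontrivWeaklyCauchy z := by
  constructor
  · intro g
    obtain ⟨L, hL⟩ := hx.1 g
    exact ⟨L, convexBlock_tendsto h hL⟩
  · rintro ⟨w, hw⟩
    apply hx.2
    refine ⟨w, fun g => ?_⟩
    obtain ⟨L, hL⟩ := hx.1 g
    have h1 := convexBlock_tendsto h hL
    have hLw : L = g w := tendsto_nhds_unique h1 (hw g)
    rwa [hLw] at hL

lemma convexBlock_map (T : X →L[ℝ] X) {x z : ℕ → X} (h : IsConvexBlockSeq x z) :
    IsConvexBlockSeq (fun k => T (x k)) (fun k => T (z k)) := by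
  obtain ⟨F, c, h1, h2, h3, h4, h5⟩ := h
  exact ⟨F, c, h1, h2, h3, h4, fun k => by simp only [h5 k, map_sum, map_smul]⟩

lemma finsetSup_le {s : Finset ℕ} {f : ℕ → ℝ} {B : ℝ} (hB : 0 ≤ B)
    (h : ∀ i ∈ s, f i ≤ B) : (⨆ i ∈ s, f i) ≤ B :=
  Real.iSup_le (fun i => Real.iSup_le (fun hi => h i hi) hB) hB

lemma le_finsetSup {s : Finset ℕ} {f : ℕ → ℝ} (h0 : ∀ i, 0 ≤ f i)
    {i : ℕ} (hi : i ∈ s) : f i ≤ ⨆ j ∈ s, f j := by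
  have hbdd : BddAbove (Set.range fun j => ⨆ _ : j ∈ s, f j) := by
    refine ⟨∑ j ∈ s, f j, ?_⟩
    rintro _ ⟨j, rfl⟩
    exact Real.iSup_le (fun hj => Finset.single_le_sum (fun i _ => h0 i) hj)
      (Finset.sum_nonneg fun i _ => h0 i)
  have h1 : f i ≤ ⨆ _ : i ∈ s, f i := by
    haveI : Nonempty (i ∈ s) := ⟨hi⟩
    exact le_of_eq ciSup_const.symm
  exact le_trans h1 (le_ciSup hbdd i)

lemma finsetSup_nonneg {s : Finset ℕ} {f : ℕ → ℝ} (h0 : ∀ i, 0 ≤ f i) :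
    0 ≤ ⨆ j ∈ s, f j :=
  Real.iSup_nonneg fun j => Real.iSup_nonneg fun _ => h0 j

lemma summing_diff_c0 {z : ℕ → X} (hz : GeneratesSummingSM z)
    {m : ℕ → ℕ} (hm : StrictMono m) :
    GeneratesC0SM (fun k => z (m (2 * k)) - z (m (2 * k + 1))) := by
  obtain ⟨C, hC1, hC⟩ := hz
  refine ⟨C, hC1, ?_⟩
  intro n k hk hk0 a
  set κ : ℕ → ℕ := fun j => m (2 * k (j / 2) + j % 2) with hκdef
  set b : ℕ → ℝ := fun j => if j % 2 = 0 then a (j / 2) else -(a (j / 2)) with hbdef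
  have hκmono : StrictMono κ := by
    intro p q hpq
    apply hm
    rcases Nat.lt_or_ge (p / 2) (q / 2) with h | h
    · have := hk h; omega
    · have hpq2 : p / 2 = q / 2 := by omega
      rw [hpq2]; omega
  have h0 : 2 * n ≤ κ 0 := by
    have hκ0 : κ 0 = m (2 * k 0) := by simp [hκdef]
    have h1 : 2 * k 0 ≤ m (2 * k 0) := hm.le_apply
    omega
  obtain ⟨h1, h2⟩ := hC (2 * n) κ hκmono h0 b
  -- partial sums of b
  have hPeven : ∀ i, ∑ j ∈ Finset.range (2 * i), b j = 0 := by
    intro i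
    induction i with
    | zero => simp
    | succ i ih =>
      have e1 : 2 * (i + 1) = 2 * i + 1 + 1 := by ring
      rw [e1, Finset.sum_range_succ, Finset.sum_range_succ, ih]
      have hb1 : b (2 * i) = a i := by
        have m1 : (2 * i) % 2 = 0 := by omega
        have m2 : (2 * i) / 2 = i := by omega
        simp [hbdef, m1, m2]
      have hb2 : b (2 * i + 1) = -(a i) := by
        have m1 : (2 * i + 1) % 2 = 1 := by omega
        have m2 : (2 * i + 1) / 2 = i := by omega
        simp [hbdef, m1, m2]
      rw [hb1, hb2]; ring
  have hPodd : ∀ i, ∑ j ∈ Finset.range (2 * i + 1), b j = a i := by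
    intro i
    rw [Finset.sum_range_succ, hPeven i]
    have m1 : (2 * i) % 2 = 0 := by omega
    have m2 : (2 * i) / 2 = i := by omega
    simp [hbdef, m1, m2]
  -- sup equality
  have hsup : (⨆ m' ∈ Finset.range (2 * n + 1), |∑ i ∈ Finset.range m', b i|)
      = ⨆ i ∈ Finset.range n, |a i| := by
    apply le_antisymm
    · refine finsetSup_le (finsetSup_nonneg (fun i => abs_nonneg _)) (fun m' hm' => ?_)
      rw [Finset.mem_range] at hm'
      rcases Nat.even_or_odd m' with ⟨i, rfl⟩ | ⟨i, rfl⟩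
      · have : i + i = 2 * i := by ring
        rw [this, hPeven i, abs_zero]
        exact finsetSup_nonneg (fun i => abs_nonneg _)
      · rw [hPodd i]
        exact le_finsetSup (fun i => abs_nonneg _)
          (Finset.mem_range.mpr (by omega))
    · refine finsetSup_le ?_ (fun i hi => ?_)
      · exact finsetSup_nonneg (fun i => abs_nonneg _)
      · rw [Finset.mem_range] at hi
        have := le_finsetSup (s := Finset.range (2 * n + 1))
          (f := fun m' => |∑ j ∈ Finset.range m', b j|)
          (fun j => abs_nonneg _) (Finset.mem_range.mpr (show 2 * i + 1 < 2 * n + 1 by omega))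
        simpa only [hPodd i] using this
  -- sum equality
  have hsum : ∀ N, ∑ j ∈ Finset.range (2 * N), b j • z (κ j)
      = ∑ i ∈ Finset.range N, a i • (z (m (2 * k i)) - z (m (2 * k i + 1))) := by
    intro N
    induction N with
    | zero => simp
    | succ N ih =>
      have e1 : 2 * (N + 1) = 2 * N + 1 + 1 := by ring
      rw [e1, Finset.sum_range_succ, Finset.sum_range_succ, ih, Finset.sum_range_succ]
      have hb1 : b (2 * N) = a N := by
        have m1 : (2 * N) % 2 = 0 := by omega
        have m2 : (2 * N) / 2 = N := by omega
        simp [hbdef, m1, m2]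
      have hb2 : b (2 * N + 1) = -(a N) := by
        have m1 : (2 * N + 1) % 2 = 1 := by omega
        have m2 : (2 * N + 1) / 2 = N := by omega
        simp [hbdef, m1, m2]
      have hκ1 : κ (2 * N) = m (2 * k N) := by
        have m1 : (2 * N) % 2 = 0 := by omega
        have m2 : (2 * N) / 2 = N := by omega
        simp [hκdef, m1, m2]
      have hκ2 : κ (2 * N + 1) = m (2 * k N + 1) := by
        have m1 : (2 * N + 1) % 2 = 1 := by omega
        have m2 : (2 * N + 1) / 2 = N := by omega
        simp [hκdef, m1, m2]
      rw [hb1, hb2, hκ1, hκ2, smul_sub, neg_smul]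
      abel
  rw [hsum n, hsup] at h1 h2
  exact ⟨h1, h2⟩

/-- Suppose every non-trivial weakly Cauchy sequence in `X` has a convex
block sequence generating the summing basis of `c₀` as a spreading model, and
`T` is a bounded operator sending every sequence generating the unit vector
basis of `c₀` as a spreading model to a norm null sequence.  Then no sequence
`(x_k)` can have both `(x_k)` and `(T x_k)` non-trivial weakly Cauchy. -/
theorem no_nontrivial_weakly_cauchy_pair
    [CompleteSpace X]
    (hX : ∀ x : ℕ → X, NontrivWeaklyCauchy x →
      ∃ z : ℕ → X, IsConvexBlockSeq x z ∧ GeneratesSummingSM z)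
    (T : X →L[ℝ] X)
    (hT : ∀ y : ℕ → X, GeneratesC0SM y → NormNull (fun k => T (y k)))
    (x : ℕ → X) (hx : NontrivWeaklyCauchy x)
    (hTx : NontrivWeaklyCauchy fun k => T (x k)) :
    False := by
  obtain ⟨z, hzb, hzsm⟩ := hX x hx
  have hTzb : IsConvexBlockSeq (fun k => T (x k)) (fun k => T (z k)) :=
    convexBlock_map T hzb
  have hTz : NontrivWeaklyCauchy (fun k => T (z k)) := convexBlock_ntwc hTzb hTx
  have hnc : ¬ CauchySeq (fun k => T (z k)) := by
    intro hc
    obtain ⟨L, hL⟩ := cauchySeq_tendsto_of_complete hc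
    exact hTz.2 ⟨L, fun g => ((g.continuous.tendsto L).comp hL)⟩
  rw [Metric.cauchySeq_iff] at hnc
  push_neg at hnc
  obtain ⟨ε, hε, hbad⟩ := hnc
  have key : ∀ N : ℕ, ∃ pq : ℕ × ℕ, N ≤ pq.1 ∧ pq.1 < pq.2 ∧
      ε ≤ ‖T (z pq.1) - T (z pq.2)‖ := by
    intro N
    obtain ⟨p, hp, q, hq, hd⟩ := hbad N
    rcases lt_trichotomy p q with h | h | h
    · exact ⟨(p, q), hp, h, by rwa [dist_eq_norm] at hd⟩
    · exfalso; rw [h, dist_self] at hd; linarith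
    · refine ⟨(q, p), hq, h, ?_⟩
      rw [dist_eq_norm] at hd
      rwa [norm_sub_rev]
  choose P hP1 hP2 hP3 using key
  set g : ℕ → ℕ × ℕ := fun k => Nat.rec (P 0) (fun _ prev => P (prev.2 + 1)) k with hgdef
  have hgP : ∀ k, ∃ N, g k = P N := by
    intro k
    cases k with
    | zero => exact ⟨0, rfl⟩
    | succ k => exact ⟨(g k).2 + 1, rfl⟩
  have hglt : ∀ k, (g k).1 < (g k).2 := by
    intro k
    obtain ⟨N, hN⟩ := hgP k
    rw [hN]; exact hP2 N
  have hgnorm : ∀ k, ε ≤ ‖T (z (g k).1) - T (z (g k).2)‖ := by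
    intro k
    obtain ⟨N, hN⟩ := hgP k
    rw [hN]; exact hP3 N
  have hgchain : ∀ k, (g k).2 < (g (k + 1)).1 := by
    intro k
    have : g (k + 1) = P ((g k).2 + 1) := rfl
    rw [this]
    have := hP1 ((g k).2 + 1)
    omega
  set m : ℕ → ℕ := fun j => if j % 2 = 0 then (g (j / 2)).1 else (g (j / 2)).2
    with hmdef
  have hm : StrictMono m := by
    apply strictMono_nat_of_lt_succ
    intro j
    rcases Nat.even_or_odd j with ⟨i, rfl⟩ | ⟨i, rfl⟩
    · have e : i + i = 2 * i := by ring
      have m1 : (2 * i) % 2 = 0 := by omega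
      have m2 : (2 * i) / 2 = i := by omega
      have m3 : (2 * i + 1) % 2 = 1 := by omega
      have m4 : (2 * i + 1) / 2 = i := by omega
      rw [e]
      simp only [hmdef, m1, m2, m3, m4]
      simpa using hglt i
    · have m1 : (2 * i + 1) % 2 = 1 := by omega
      have m2 : (2 * i + 1) / 2 = i := by omega
      have m3 : (2 * i + 1 + 1) % 2 = 0 := by omega
      have m4 : (2 * i + 1 + 1) / 2 = i + 1 := by omega
      simp only [hmdef, m1, m2, m3, m4]
      simpa using hgchain i
  have hm1 : ∀ k, m (2 * k) = (g k).1 := by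
    intro k
    have m1 : (2 * k) % 2 = 0 := by omega
    have m2 : (2 * k) / 2 = k := by omega
    simp [hmdef, m1, m2]
  have hm2 : ∀ k, m (2 * k + 1) = (g k).2 := by
    intro k
    have m1 : (2 * k + 1) % 2 = 1 := by omega
    have m2 : (2 * k + 1) / 2 = k := by omega
    simp [hmdef, m1, m2]
  have hc0 : GeneratesC0SM (fun k => z (m (2 * k)) - z (m (2 * k + 1))) :=
    summing_diff_c0 hzsm hm
  have hnull := hT _ hc0
  rw [NormNull, Metric.tendsto_atTop] at hnull
  obtain ⟨N, hN⟩ := hnull ε hε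
  have h1 := hN N le_rfl
  rw [Real.dist_eq, sub_zero, abs_of_nonneg (norm_nonneg _)] at h1
  have h2 : ε ≤ ‖T (z (m (2 * N)) - z (m (2 * N + 1)))‖ := by
    rw [map_sub, hm1 N, hm2 N]
    exact hgnorm N
  linarith
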